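/- Let x_d : ℝ≥0 → ℝ^p satisfy ẋ_d(t) = -α F(t) φ(t) φ(t)ᵀ x_d(t) + α F(t) φ(t) d(t) where F is positive definite with d/dt[F⁻¹] = -β(t) F⁻¹ + α φ φᵀ and β(t) ≥ β_min > 0. Then W(t) := (1/2) x_d(t)ᵀ F⁻¹(t) x_d(t) satisfies Ẇ(t) ≤ -β(t) W(t) + (α/2) d²(t); consequently, if d is bounded then W (and hence x_d, if F is bounded) is bounded. -/

import Mathlib

open Matrix

attribute [local instance] Matrix.normedAddCommGroup Matrix.normedSpace

lemma hasDerivAt_quad {p : ℕ} {u : ℝ → Fin p → ℝ} {A : ℝ → Matrix (Fin p) (Fin p) ℝ}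
    {u' : Fin p → ℝ} {A' : Matrix (Fin p) (Fin p) ℝ} {t : ℝ}
    (hu : HasDerivAt u u' t) (hA : HasDerivAt A A' t) :
    HasDerivAt (fun s => u s ⬝ᵥ (A s) *ᵥ u s)
      (u' ⬝ᵥ A t *ᵥ u t + u t ⬝ᵥ A' *ᵥ u t + u t ⬝ᵥ A t *ᵥ u') t := by
  have hui : ∀ i, HasDerivAt (fun s => u s i) (u' i) t := fun i => hasDerivAt_pi.1 hu i
  have hAij : ∀ i j, HasDerivAt (fun s => A s i j) (A' i j) t := fun i j =>
    hasDerivAt_pi.1 (hasDerivAt_pi.1 hA i) j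
  have h : HasDerivAt (fun s => ∑ i, ∑ j, u s i * (A s i j * u s j))
      (∑ i, ∑ j, (u' i * (A t i j * u t j) +
        u t i * (A' i j * u t j + A t i j * u' j))) t := by
    apply HasDerivAt.fun_sum
    intro i _
    apply HasDerivAt.fun_sum
    intro j _
    exact (hui i).mul ((hAij i j).mul (hui j))
  convert h using 1
  · funext s
    simp [dotProduct, mulVec, Finset.mul_sum]
  · simp only [dotProduct, mulVec, Finset.mul_sum, ← Finset.sum_add_distrib]
    exact Finset.sum_congr rfl fun i _ => Finset.sum_congr rfl fun j _ => by ring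


/-- BIBO-stability of the perturbed LS dynamics: `W = ½ x_dᵀ F⁻¹ x_d`
satisfies `Ẇ ≤ -β W + (α/2) d²`, hence `W` is bounded when `d` is bounded. -/
theorem stmt16 {p : ℕ} (F : ℝ → Matrix (Fin p) (Fin p) ℝ)
    (xd : ℝ → Fin p → ℝ) (φ : ℝ → Fin p → ℝ) (d β : ℝ → ℝ)
    (α βmin : ℝ) (hα : 0 < α) (hβmin : 0 < βmin)
    (hφ : Continuous φ) (hd : Continuous d)
    (hFpd : ∀ t, 0 ≤ t → (F t).PosDef)
    (hβ : ∀ t, 0 ≤ t → βmin ≤ β t)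
    (hFinv : ∀ t, 0 ≤ t → HasDerivAt (fun s => (F s)⁻¹)
      (-(β t) • (F t)⁻¹ + α • vecMulVec (φ t) (φ t)) t)
    (hxd : ∀ t, 0 ≤ t → HasDerivAt xd
      (-α • (F t).mulVec ((vecMulVec (φ t) (φ t)).mulVec (xd t)) +
        (α * d t) • (F t).mulVec (φ t)) t)
    (W : ℝ → ℝ)
    (hW : ∀ t, W t = (1 / 2) * (xd t ⬝ᵥ (F t)⁻¹.mulVec (xd t))) :
    (∀ t, 0 ≤ t → ∃ w' : ℝ, HasDerivAt W w' t ∧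
      w' ≤ -(β t) * W t + (α / 2) * (d t) ^ 2) ∧
    ((∃ D : ℝ, ∀ t, 0 ≤ t → |d t| ≤ D) →
      ∃ B : ℝ, ∀ t, 0 ≤ t → W t ≤ B) := by
  have hWfun : W = fun s => (1/2) * (xd s ⬝ᵥ (F s)⁻¹ *ᵥ xd s) := funext hW
  -- the key derivative formula
  have key : ∀ t, 0 ≤ t → HasDerivAt W
      (-(β t) * W t + α * d t * (φ t ⬝ᵥ xd t) - (α/2) * (φ t ⬝ᵥ xd t)^2) t := by
    intro t ht
    set x := xd t with hx
    set φt := φ t with hφt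
    set M := (F t)⁻¹ with hMdef
    set s := φt ⬝ᵥ x with hs
    have hMpd : M.PosDef := (hFpd t ht).inv
    have hMsymm : Mᵀ = M := by
      have h := hMpd.isHermitian
      rwa [Matrix.IsHermitian, conjTranspose_eq_transpose_of_trivial] at h
    have hMF : M * F t = 1 :=
      Matrix.nonsing_inv_mul _ (hFpd t ht).det_pos.ne'.isUnit
    have hA : ∀ y : Fin p → ℝ, M *ᵥ (F t *ᵥ y) = y := by
      intro y; rw [mulVec_mulVec, hMF, one_mulVec]
    have hB : ∀ y : Fin p → ℝ, vecMulVec φt φt *ᵥ y = (φt ⬝ᵥ y) • φt := by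
      intro y; funext i
      simp only [Matrix.mulVec, Matrix.vecMulVec_apply, dotProduct, Pi.smul_apply,
        smul_eq_mul]
      rw [Finset.sum_mul]
      exact Finset.sum_congr rfl fun j _ => by ring
    set x' := -α • (F t).mulVec ((vecMulVec φt φt).mulVec x) +
        (α * d t) • (F t).mulVec φt with hx'
    set M' := -(β t) • M + α • vecMulVec φt φt with hM'
    have h1 : x ⬝ᵥ M *ᵥ x' = α * d t * s - α * s^2 := by
      rw [hx', mulVec_add, mulVec_smul, mulVec_smul, hA, hA, hB, dotProduct_add,
        dotProduct_smul, dotProduct_smul, dotProduct_smul, smul_eq_mul, smul_eq_mul,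
        smul_eq_mul, dotProduct_comm x φt, ← hs]
      ring
    have h2 : x' ⬝ᵥ M *ᵥ x = α * d t * s - α * s^2 := by
      rw [Matrix.dotProduct_mulVec]
      have hvm : x' ᵥ* M = M *ᵥ x' := by
        conv_lhs => rw [← hMsymm, vecMul_transpose]
      rw [hvm, dotProduct_comm, h1]
    have h3 : x ⬝ᵥ M' *ᵥ x = -(β t) * (x ⬝ᵥ M *ᵥ x) + α * s^2 := by
      rw [hM', add_mulVec, neg_smul, neg_mulVec, smul_mulVec, smul_mulVec,
        hB, dotProduct_add, dotProduct_neg, dotProduct_smul, dotProduct_smul,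
        dotProduct_smul, smul_eq_mul, smul_eq_mul, smul_eq_mul,
        dotProduct_comm x φt, ← hs]
      ring
    have hq := hasDerivAt_quad (hxd t ht) (hFinv t ht)
    rw [← hx, ← hφt, ← hMdef, ← hx', ← hM'] at hq
    have hw : HasDerivAt W
        ((1/2) * (x' ⬝ᵥ M *ᵥ x + x ⬝ᵥ M' *ᵥ x + x ⬝ᵥ M *ᵥ x')) t := by
      rw [hWfun]
      exact hq.const_mul (1/2)
    convert hw using 1
    rw [h1, h2, h3, hW t]
    ring
  constructor
  · intro t ht
    refine ⟨_, key t ht, ?_⟩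
    nlinarith [sq_nonneg (φ t ⬝ᵥ xd t - d t), hα.le]
  · rintro ⟨D, hD⟩
    set C := α/2 * D^2 with hC
    have hWnn : ∀ t, 0 ≤ t → 0 ≤ W t := by
      intro t ht
      rw [hW t]
      have h := ((hFpd t ht).inv).posSemidef.re_dotProduct_nonneg (xd t)
      simp only [RCLike.star_def, starRingEnd_apply, star_trivial, RCLike.re_to_real] at h
      positivity
    have hDnn : 0 ≤ D := le_trans (abs_nonneg _) (hD 0 le_rfl)
    set V : ℝ → ℝ := fun t => Real.exp (βmin * t) * (W t - C/βmin) with hV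
    have hVd : ∀ t, 0 ≤ t → ∃ v' : ℝ, HasDerivAt V v' t ∧ v' ≤ 0 := by
      intro t ht
      have hw := key t ht
      have he : HasDerivAt (fun u => Real.exp (βmin * u)) (Real.exp (βmin*t) * βmin) t := by
        simpa using (((hasDerivAt_id t).const_mul βmin).exp)
      have hv := he.mul (hw.sub_const (C/βmin))
      refine ⟨_, hv, ?_⟩
      have hd2 : (d t)^2 ≤ D^2 := sq_le_sq' (neg_le_of_abs_le (hD t ht)) (le_of_abs_le (hD t ht))
      have hw0 : -(β t) * W t + α * d t * (φ t ⬝ᵥ xd t) - (α/2) * (φ t ⬝ᵥ xd t)^2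
          ≤ -βmin * W t + C := by
        have h1 : α * d t * (φ t ⬝ᵥ xd t) - (α/2) * (φ t ⬝ᵥ xd t)^2 ≤ (α/2) * (d t)^2 := by
          nlinarith [sq_nonneg (φ t ⬝ᵥ xd t - d t), hα.le]
        have h2 : -(β t) * W t ≤ -βmin * W t := by
          have := hβ t ht
          nlinarith [hWnn t ht]
        have h3 : (α/2) * (d t)^2 ≤ C := by
          rw [hC]; nlinarith [hα.le]
        linarith
      have hexp := Real.exp_pos (βmin * t)
      calc Real.exp (βmin*t) * βmin * (W t - C/βmin) +
            Real.exp (βmin*t) * (-(β t) * W t + α * d t * (φ t ⬝ᵥ xd t)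
              - (α/2) * (φ t ⬝ᵥ xd t)^2)
          ≤ Real.exp (βmin*t) * βmin * (W t - C/βmin) +
            Real.exp (βmin*t) * (-βmin * W t + C) := by
            exact add_le_add (le_refl _) (by nlinarith)
        _ = 0 := by field_simp; ring
    have hanti : AntitoneOn V (Set.Ici (0:ℝ)) := by
      apply antitoneOn_of_deriv_nonpos (convex_Ici 0)
      · intro t ht
        obtain ⟨v', hv, _⟩ := hVd t ht
        exact hv.continuousAt.continuousWithinAt
      · intro t ht
        rw [interior_Ici] at ht
        obtain ⟨v', hv, _⟩ := hVd t ht.le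
        exact hv.differentiableAt.differentiableWithinAt
      · intro t ht
        rw [interior_Ici] at ht
        obtain ⟨v', hv, hv0⟩ := hVd t ht.le
        rw [hv.deriv]
        exact hv0
    refine ⟨max (W 0) (C/βmin), fun t ht => ?_⟩
    have hVt : V t ≤ V 0 := hanti (Set.self_mem_Ici) ht ht
    have hV0 : V 0 = W 0 - C/βmin := by simp [hV]
    rcases le_or_gt (W t) (C/βmin) with h | h
    · exact le_trans h (le_max_right _ _)
    · have h1 : W t - C/βmin ≤ Real.exp (βmin*t) * (W t - C/βmin) :=
        le_mul_of_one_le_left (by linarith) (Real.one_le_exp (by positivity))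
      have : W t - C/βmin ≤ W 0 - C/βmin := by
        rw [← hV0]
        exact le_trans h1 hVt
      exact le_trans (by linarith) (le_max_left _ _)
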